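/- Fix l, d, s ∈ ℕ with ⌊l/2⌋ ≤ d ≤ l, and set P^l_{d,s} := {P ∈ ℂ[X₀,X₁]_l ∖ {0} : dim_ℂ C_P^d = s} and P^l_r := {P ∈ ℂ[X₀,X₁]_l ∖ {0} : d₁(P) = r}. Then: P^l_{d,s} = P^l_{l−d+1−s} if 0 < s ≤ l − d; P^l_{d,s} = ⋃_{l−d+1 ≤ r ≤ ⌊l/2⌋+1} P^l_r if s = 0; and P^l_{d,s} = ∅ if s > l − d. -/

import Mathlib

/-!
Common definitions: the apolar action of `ℂ[X₀,X₁]` on itself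
(`Q • P := Q(∂/∂X₀, ∂/∂X₁)(P)`), the apolar ideal `Ann(P)` and its homogeneous
components, the cokernel `C_P^d` of `Q ↦ Q • P : ℂ[X₀,X₁]_d → ℂ[X₀,X₁]_{l-d}`,
the invariant `d₁(P)` and the Waring rank.
-/

open MvPolynomial

noncomputable section

/-- The partial derivative `∂/∂Xᵢ` as a `ℂ`-linear endomorphism of `ℂ[X₀,X₁]`. -/
def pd (i : Fin 2) : Module.End ℂ (MvPolynomial (Fin 2) ℂ) := (pderiv (R := ℂ) i).toLinearMap

lemma pd_comm : Commute (pd 0) (pd 1) := by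
  apply LinearMap.ext
  intro P
  induction P using MvPolynomial.induction_on' with
  | monomial s a =>
      simp [pd, Module.End.mul_apply, pderiv_monomial]
      rw [tsub_right_comm, mul_right_comm]
  | add p q hp hq => simp_all [Module.End.mul_apply, map_add]

/-- The endomorphism `∂₀^{m 0} ∘ ∂₁^{m 1}` of `ℂ[X₀,X₁]`, as a monoid homomorphism in the
exponent `m`. -/
def derivMonomialHom :
    Multiplicative (Fin 2 →₀ ℕ) →* Module.End ℂ (MvPolynomial (Fin 2) ℂ) where
  toFun m := pd 0 ^ (Multiplicative.toAdd m 0) * pd 1 ^ (Multiplicative.toAdd m 1)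
  map_one' := by simp
  map_mul' a b := by
    simp only [toAdd_mul, Finsupp.add_apply, pow_add]
    exact (Commute.pow_pow pd_comm _ _).mul_mul_mul_comm _ _

/-- The representation of `ℂ[X₀,X₁]` by constant-coefficient differential operators:
`diffOp Q = Q(∂/∂X₀, ∂/∂X₁)`.  It is the morphism of `ℂ`-algebras sending `X i` to
`∂/∂Xᵢ`. -/
def diffOp : MvPolynomial (Fin 2) ℂ →ₐ[ℂ] Module.End ℂ (MvPolynomial (Fin 2) ℂ) :=
  AddMonoidAlgebra.lift ℂ _ (Fin 2 →₀ ℕ) derivMonomialHom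

/-- The apolar action `Q • P := Q(∂/∂X₀, ∂/∂X₁)(P)`. -/
def apolar (Q P : MvPolynomial (Fin 2) ℂ) : MvPolynomial (Fin 2) ℂ := diffOp Q P

/-- For fixed `P`, the map `Q ↦ Q • P` is `ℂ`-linear in `Q`. -/
def apolarLM (P : MvPolynomial (Fin 2) ℂ) :
    MvPolynomial (Fin 2) ℂ →ₗ[ℂ] MvPolynomial (Fin 2) ℂ :=
  (LinearMap.applyₗ P).comp diffOp.toLinearMap

lemma apolarLM_apply (P Q : MvPolynomial (Fin 2) ℂ) : apolarLM P Q = apolar Q P := rfl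

/-- The apolar ideal `Ann(P) = {Q | Q • P = 0}`. -/
def annIdeal (P : MvPolynomial (Fin 2) ℂ) : Ideal (MvPolynomial (Fin 2) ℂ) where
  carrier := {Q | apolar Q P = 0}
  zero_mem' := by simp [apolar]
  add_mem' := by
    intro a b ha hb
    simp only [Set.mem_setOf_eq, apolar, map_add, LinearMap.add_apply] at *
    rw [ha, hb, add_zero]
  smul_mem' := by
    intro c Q hQ
    simp only [Set.mem_setOf_eq, smul_eq_mul, apolar, map_mul, Module.End.mul_apply] at *
    rw [hQ, map_zero]

/-- The degree-`d` homogeneous component `Ann(P)_d` of the apolar ideal of `P`. -/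
def annComp (P : MvPolynomial (Fin 2) ℂ) (d : ℕ) :
    Submodule ℂ (MvPolynomial (Fin 2) ℂ) :=
  homogeneousSubmodule (Fin 2) ℂ d ⊓ LinearMap.ker (apolarLM P)

/-- The image of `ℂ[X₀,X₁]_d` under `Q ↦ Q • P`, viewed as a subspace of `ℂ[X₀,X₁]_{l-d}`
(for `P` homogeneous of degree `l` and `d ≤ l` the image is indeed contained in
`ℂ[X₀,X₁]_{l-d}`). -/
def apolarImage (P : MvPolynomial (Fin 2) ℂ) (l d : ℕ) :
    Submodule ℂ (homogeneousSubmodule (Fin 2) ℂ (l - d)) :=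
  Submodule.comap (homogeneousSubmodule (Fin 2) ℂ (l - d)).subtype
    (Submodule.map (apolarLM P) (homogeneousSubmodule (Fin 2) ℂ d))

/-- `C_P^d`: the cokernel of the `ℂ`-linear map `ℂ[X₀,X₁]_d → ℂ[X₀,X₁]_{l-d}`, `Q ↦ Q • P`. -/
abbrev ApolarCoker (P : MvPolynomial (Fin 2) ℂ) (l d : ℕ) :=
  (homogeneousSubmodule (Fin 2) ℂ (l - d)) ⧸ apolarImage P l d

/-- `d₁(P)`: the minimal degree of a nonzero homogeneous polynomial in `Ann(P)`. -/
def d1 (P : MvPolynomial (Fin 2) ℂ) : ℕ :=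
  sInf {d | ∃ Q : MvPolynomial (Fin 2) ℂ, Q ≠ 0 ∧ Q.IsHomogeneous d ∧ apolar Q P = 0}

/-- The Waring rank of a binary form `P` of degree `l`: the least `r` such that `P` is a sum
of `r` `l`-th powers of linear forms. -/
def waringRank (l : ℕ) (P : MvPolynomial (Fin 2) ℂ) : ℕ :=
  sInf {r | ∃ lam : Fin r → MvPolynomial (Fin 2) ℂ,
    (∀ i, (lam i).IsHomogeneous 1) ∧ P = ∑ i, lam i ^ l}

end

-- ================= PART 1 : apolar basics =================

noncomputable section

open Module

lemma degree_two (m : Fin 2 →₀ ℕ) : m.degree = m 0 + m 1 := by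
  rw [Finsupp.degree_apply, Finset.sum_subset (Finset.subset_univ m.support)]
  · exact Fin.sum_univ_two m
  · intro x _ hx
    simpa using (Finsupp.notMem_support_iff.mp hx)

lemma decomp_two (m : Fin 2 →₀ ℕ) :
    m = Finsupp.single 0 (m 0) + Finsupp.single 1 (m 1) := by
  ext i
  fin_cases i <;> simp

lemma diffOp_monomial (m : Fin 2 →₀ ℕ) (a : ℂ) :
    diffOp (monomial m a) = a • (pd 0 ^ m 0 * pd 1 ^ m 1) := by
  have h : (monomial m a : MvPolynomial (Fin 2) ℂ) = AddMonoidAlgebra.single m a := rfl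
  rw [diffOp, h]
  exact AddMonoidAlgebra.lift_single derivMonomialHom m a

lemma pd_pow_monomial (i : Fin 2) (k : ℕ) (n : Fin 2 →₀ ℕ) (b : ℂ) :
    (pd i ^ k) (monomial n b) =
      ((n i).descFactorial k : ℂ) • monomial (n - Finsupp.single i k) b := by
  induction k with
  | zero => simp
  | succ k ih =>
      rw [pow_succ', Module.End.mul_apply, ih, map_smul]
      have hpd : pd i (monomial (n - Finsupp.single i k) b) =
          monomial (n - Finsupp.single i k - Finsupp.single i 1)
            (b * (((n - Finsupp.single i k : Fin 2 →₀ ℕ) i : ℕ) : ℂ)) := by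
        simp [pd, pderiv_monomial]
      have h1 : n - Finsupp.single i k - Finsupp.single i 1 =
          n - Finsupp.single i (k + 1) := by
        rw [tsub_tsub, ← Finsupp.single_add]
      have h2 : ((n - Finsupp.single i k : Fin 2 →₀ ℕ) i) = n i - k := by
        simp [Finsupp.tsub_apply]
      rw [hpd, h1, h2]
      have h3 : (monomial (n - Finsupp.single i (k+1))) (b * ((n i - k : ℕ) : ℂ)) =
          ((n i - k : ℕ) : ℂ) • (monomial (n - Finsupp.single i (k+1))) b := by
        rw [MvPolynomial.smul_monomial, smul_eq_mul, mul_comm]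
      rw [h3, smul_smul, Nat.descFactorial_succ, Nat.cast_mul, mul_comm]

lemma apolar_monomial (m n : Fin 2 →₀ ℕ) (a b : ℂ) :
    apolar (monomial m a) (monomial n b) =
      (((n 0).descFactorial (m 0) * (n 1).descFactorial (m 1) : ℕ) : ℂ) •
        monomial (n - m) (a * b) := by
  rw [apolar, diffOp_monomial]
  simp only [LinearMap.smul_apply, Module.End.mul_apply]
  rw [pd_pow_monomial, map_smul, pd_pow_monomial]
  have h0 : ((n - Finsupp.single 1 (m 1) : Fin 2 →₀ ℕ) 0) = n 0 := by
    simp [Finsupp.tsub_apply, Finsupp.single_eq_of_ne]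
  have h1 : n - Finsupp.single 1 (m 1) - Finsupp.single 0 (m 0) = n - m := by
    rw [tsub_tsub, add_comm, ← decomp_two]
  rw [h0, h1, smul_smul, smul_smul]
  rw [Nat.cast_mul]
  have h3 : (monomial (n - m)) (a * b) = a • (monomial (n - m)) b := by
    rw [MvPolynomial.smul_monomial, smul_eq_mul]
  rw [h3, smul_smul]
  congr 1
  ring

lemma apolar_monomial_of_not_le (m n : Fin 2 →₀ ℕ) (a b : ℂ) (h : ¬ m ≤ n) :
    apolar (monomial m a) (monomial n b) = 0 := by
  rw [apolar_monomial]
  rw [Finsupp.le_def] at h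
  push_neg at h
  obtain ⟨i, hi⟩ := h
  have hz : (n 0).descFactorial (m 0) * (n 1).descFactorial (m 1) = 0 := by
    fin_cases i
    · exact Nat.mul_eq_zero.mpr (Or.inl (Nat.descFactorial_eq_zero_iff_lt.mpr hi))
    · exact Nat.mul_eq_zero.mpr (Or.inr (Nat.descFactorial_eq_zero_iff_lt.mpr hi))
  rw [hz]
  simp

end

-- ================= PART 2 : linearity, homogeneity, pairing =================

noncomputable section

open Module

lemma apolar_sum_left {ι : Type*} (s : Finset ι) (f : ι → MvPolynomial (Fin 2) ℂ)
    (P : MvPolynomial (Fin 2) ℂ) :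
    apolar (∑ i ∈ s, f i) P = ∑ i ∈ s, apolar (f i) P := by
  rw [← apolarLM_apply, map_sum]
  rfl

lemma apolar_sum_right {ι : Type*} (s : Finset ι) (f : ι → MvPolynomial (Fin 2) ℂ)
    (Q : MvPolynomial (Fin 2) ℂ) :
    apolar Q (∑ i ∈ s, f i) = ∑ i ∈ s, apolar Q (f i) := by
  unfold apolar
  exact map_sum (diffOp Q) f s

lemma apolar_add_right (Q P₁ P₂ : MvPolynomial (Fin 2) ℂ) :
    apolar Q (P₁ + P₂) = apolar Q P₁ + apolar Q P₂ := map_add (diffOp Q) P₁ P₂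

lemma apolar_sub_right (Q P₁ P₂ : MvPolynomial (Fin 2) ℂ) :
    apolar Q (P₁ - P₂) = apolar Q P₁ - apolar Q P₂ := map_sub (diffOp Q) P₁ P₂

lemma apolar_smul_right (c : ℂ) (Q P : MvPolynomial (Fin 2) ℂ) :
    apolar Q (c • P) = c • apolar Q P := map_smul (diffOp Q) c P

lemma apolar_mul (Q R P : MvPolynomial (Fin 2) ℂ) :
    apolar (Q * R) P = apolar Q (apolar R P) := by
  unfold apolar
  rw [map_mul]
  rfl

lemma apolar_mul' (Q R P : MvPolynomial (Fin 2) ℂ) :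
    apolar (Q * R) P = apolar R (apolar Q P) := by
  rw [mul_comm, apolar_mul]

lemma apolar_zero_right (Q : MvPolynomial (Fin 2) ℂ) : apolar Q 0 = 0 :=
  map_zero (diffOp Q)

lemma homog_degree {Q : MvPolynomial (Fin 2) ℂ} {e : ℕ} (hQ : Q.IsHomogeneous e)
    {m : Fin 2 →₀ ℕ} (hm : MvPolynomial.coeff m Q ≠ 0) : m.degree = e := by
  rw [Finsupp.degree_eq_weight_one]
  exact hQ hm

lemma apolar_C (c : ℂ) (P : MvPolynomial (Fin 2) ℂ) : apolar (C c) P = c • P := by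
  have h : (C c : MvPolynomial (Fin 2) ℂ) = monomial 0 c := by simp
  rw [apolar, h, diffOp_monomial]
  simp

/-- homogeneity of the apolar action -/
lemma apolar_mem_homog {Q P : MvPolynomial (Fin 2) ℂ} {e l : ℕ}
    (hQ : Q.IsHomogeneous e) (hP : P.IsHomogeneous l) :
    apolar Q P ∈ homogeneousSubmodule (Fin 2) ℂ (l - e) := by
  rw [← MvPolynomial.support_sum_monomial_coeff Q, apolar_sum_left]
  apply Submodule.sum_mem
  intro m hm
  rw [← MvPolynomial.support_sum_monomial_coeff P, apolar_sum_right]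
  apply Submodule.sum_mem
  intro n hn
  by_cases hle : m ≤ n
  · rw [apolar_monomial]
    apply Submodule.smul_mem
    rw [mem_homogeneousSubmodule]
    apply isHomogeneous_monomial
    have hdm : m.degree = e := homog_degree hQ (MvPolynomial.mem_support_iff.mp hm)
    have hdn : n.degree = l := homog_degree hP (MvPolynomial.mem_support_iff.mp hn)
    rw [degree_two] at *
    rw [Finsupp.le_def] at hle
    have h0 := hle 0
    have h1 := hle 1
    simp only [Finsupp.tsub_apply]
    omega
  · rw [apolar_monomial_of_not_le _ _ _ _ hle]
    exact Submodule.zero_mem _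

lemma apolar_isHomogeneous {Q P : MvPolynomial (Fin 2) ℂ} {e l : ℕ}
    (hQ : Q.IsHomogeneous e) (hP : P.IsHomogeneous l) :
    (apolar Q P).IsHomogeneous (l - e) :=
  (mem_homogeneousSubmodule _ _).mp (apolar_mem_homog hQ hP)

lemma le_antisymm_degree {m n : Fin 2 →₀ ℕ} (hle : m ≤ n) (h : m.degree = n.degree) :
    m = n := by
  rw [Finsupp.le_def] at hle
  have h0 := hle 0
  have h1 := hle 1
  rw [degree_two, degree_two] at h
  ext i
  fin_cases i <;> simp <;> omega

lemma apolar_monomial_homog {Q : MvPolynomial (Fin 2) ℂ} {k : ℕ} (hQ : Q.IsHomogeneous k)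
    {m : Fin 2 →₀ ℕ} (hm : m.degree = k) :
    apolar (monomial m 1) Q =
      C ((((m 0).factorial * (m 1).factorial : ℕ) : ℂ) * coeff m Q) := by
  conv_lhs => rw [← MvPolynomial.support_sum_monomial_coeff Q]
  rw [apolar_sum_right]
  rw [Finset.sum_eq_single m]
  · by_cases hms : m ∈ Q.support
    · rw [apolar_monomial]
      simp only [Nat.descFactorial_self, tsub_self]
      rw [MvPolynomial.smul_eq_C_mul, one_mul, ← MvPolynomial.C_apply, ← MvPolynomial.C_mul]
    · rw [MvPolynomial.notMem_support_iff.mp hms]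
      simp [apolar_zero_right]
  · intro n hn hne
    by_cases hle : m ≤ n
    · exfalso
      have hdn : n.degree = k := homog_degree hQ (MvPolynomial.mem_support_iff.mp hn)
      exact hne (le_antisymm_degree hle (by rw [hm, hdn])).symm
    · exact apolar_monomial_of_not_le _ _ _ _ hle
  · intro hms
    rw [MvPolynomial.notMem_support_iff.mp hms]
    simp [apolar_zero_right]

lemma exists_apolar_ne_zero {S : MvPolynomial (Fin 2) ℂ} {k : ℕ}
    (hS : S.IsHomogeneous k) (h : S ≠ 0) :
    ∃ R : MvPolynomial (Fin 2) ℂ, R.IsHomogeneous k ∧ coeff 0 (apolar R S) ≠ 0 := by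
  obtain ⟨m, hm⟩ := MvPolynomial.ne_zero_iff.mp h
  have hdm : m.degree = k := homog_degree hS hm
  refine ⟨monomial m 1, isHomogeneous_monomial 1 hdm, ?_⟩
  rw [apolar_monomial_homog hS hdm]
  rw [MvPolynomial.coeff_zero_C]
  exact mul_ne_zero (Nat.cast_ne_zero.mpr (by positivity)) hm

end

-- ================= PART 3 : dimension of homogeneous components =================

noncomputable section

open Module

/-- exponents of the monomial basis of the degree-`n` component -/
def hexp (n : ℕ) (j : Fin (n+1)) : Fin 2 →₀ ℕ :=
  Finsupp.single (0 : Fin 2) (n - (j : ℕ)) + Finsupp.single (1 : Fin 2) (j : ℕ)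

lemma hexp_apply_zero (n : ℕ) (j : Fin (n+1)) : hexp n j 0 = n - j := by
  simp [hexp]

lemma hexp_apply_one (n : ℕ) (j : Fin (n+1)) : hexp n j 1 = j := by
  simp [hexp, Finsupp.single_apply]

lemma hexp_degree (n : ℕ) (j : Fin (n+1)) : (hexp n j).degree = n := by
  rw [degree_two, hexp_apply_zero, hexp_apply_one]
  omega

lemma hexp_injective (n : ℕ) : Function.Injective (hexp n) := by
  intro j j' h
  have := congrArg (fun f => f 1) h
  simp only [hexp_apply_one] at this
  exact Fin.ext (by exact_mod_cast this)

lemma eq_hexp {n : ℕ} {m : Fin 2 →₀ ℕ} (hm : m.degree = n) :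
    m = hexp n ⟨m 1, by rw [degree_two] at hm; omega⟩ := by
  rw [degree_two] at hm
  have h0 : m 0 = n - m 1 := by omega
  conv_lhs => rw [decomp_two m]
  simp only [hexp, Fin.val_mk]
  rw [h0]

lemma homog_rep {P : MvPolynomial (Fin 2) ℂ} {n : ℕ} (hP : P.IsHomogeneous n) :
    P = ∑ j : Fin (n+1), monomial (hexp n j) (coeff (hexp n j) P) := by
  apply MvPolynomial.ext
  intro μ
  rw [MvPolynomial.coeff_sum]
  by_cases hdeg : μ.degree = n
  · have hj : μ = hexp n ⟨μ 1, by rw [degree_two] at hdeg; omega⟩ := eq_hexp hdeg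
    rw [Finset.sum_eq_single (⟨μ 1, by rw [degree_two] at hdeg; omega⟩ : Fin (n+1))]
    · rw [MvPolynomial.coeff_monomial, if_pos hj.symm, ← hj]
    · intro b _ hb
      rw [MvPolynomial.coeff_monomial, if_neg]
      intro hcontra
      exact hb (hexp_injective n (hcontra.trans hj))
    · intro hh
      exact absurd (Finset.mem_univ _) hh
  · rw [hP.coeff_eq_zero hdeg]
    symm
    apply Finset.sum_eq_zero
    intro j _
    rw [MvPolynomial.coeff_monomial, if_neg]
    intro hcontra
    exact hdeg (by rw [← hcontra, hexp_degree])

/-- the canonical degree-`n` monomial vectors -/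
def hvec (n : ℕ) (j : Fin (n+1)) : homogeneousSubmodule (Fin 2) ℂ n :=
  ⟨monomial (hexp n j) 1,
    (mem_homogeneousSubmodule _ _).mpr (isHomogeneous_monomial 1 (hexp_degree n j))⟩

lemma hvec_independent (n : ℕ) : LinearIndependent ℂ (hvec n) := by
  apply LinearIndependent.of_comp (homogeneousSubmodule (Fin 2) ℂ n).subtype
  have : ((homogeneousSubmodule (Fin 2) ℂ n).subtype ∘ hvec n) =
      (MvPolynomial.basisMonomials (Fin 2) ℂ) ∘ (hexp n) := by
    funext j
    simp [hvec, MvPolynomial.coe_basisMonomials]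
  rw [this]
  exact (MvPolynomial.basisMonomials (Fin 2) ℂ).linearIndependent.comp _ (hexp_injective n)

lemma hvec_span (n : ℕ) : ⊤ ≤ Submodule.span ℂ (Set.range (hvec n)) := by
  rintro ⟨P, hP⟩ _
  have hrep := homog_rep ((mem_homogeneousSubmodule _ _).mp hP)
  have hsum : (⟨P, hP⟩ : homogeneousSubmodule (Fin 2) ℂ n) =
      ∑ j : Fin (n+1), (coeff (hexp n j) P) • hvec n j := by
    apply Subtype.ext
    push_cast [hvec]
    conv_lhs => rw [hrep]
    apply Finset.sum_congr rfl
    intro j _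
    rw [MvPolynomial.smul_monomial, smul_eq_mul, mul_one]
  rw [hsum]
  apply Submodule.sum_mem
  intro j _
  exact Submodule.smul_mem _ _ (Submodule.subset_span (Set.mem_range_self j))

/-- the monomial basis of the degree-`n` homogeneous component -/
def homBasis (n : ℕ) : Basis (Fin (n+1)) ℂ (homogeneousSubmodule (Fin 2) ℂ n) :=
  Basis.mk (hvec_independent n) (hvec_span n)

lemma homBasis_apply (n : ℕ) (j : Fin (n+1)) : homBasis n j = hvec n j :=
  Basis.mk_apply _ _ j

instance homog_fd (n : ℕ) : FiniteDimensional ℂ (homogeneousSubmodule (Fin 2) ℂ n) :=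
  Module.Finite.of_basis (homBasis n)

lemma finrank_homog (n : ℕ) :
    Module.finrank ℂ (homogeneousSubmodule (Fin 2) ℂ n) = n + 1 := by
  rw [finrank_eq_card_basis (homBasis n), Fintype.card_fin]

end

-- ================= PART 4 : pairing, rank symmetry, dimensions =================

noncomputable section

open Module

abbrev HS (n : ℕ) : Submodule ℂ (MvPolynomial (Fin 2) ℂ) := homogeneousSubmodule (Fin 2) ℂ n

/-- dimension of the degree-`e` part of the apolar ideal -/
def annDim (P : MvPolynomial (Fin 2) ℂ) (e : ℕ) : ℕ := Module.finrank ℂ (annComp P e)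

lemma apolar_add_left (Q₁ Q₂ P : MvPolynomial (Fin 2) ℂ) :
    apolar (Q₁ + Q₂) P = apolar Q₁ P + apolar Q₂ P := by
  rw [← apolarLM_apply, ← apolarLM_apply, ← apolarLM_apply, map_add]

lemma apolar_smul_left (c : ℂ) (Q P : MvPolynomial (Fin 2) ℂ) :
    apolar (c • Q) P = c • apolar Q P := by
  rw [← apolarLM_apply, ← apolarLM_apply, map_smul]

/-- the apolarity pairing `(Q, R) ↦ ((QR) • P)(0)` -/
def bform (P : MvPolynomial (Fin 2) ℂ) :
    MvPolynomial (Fin 2) ℂ →ₗ[ℂ] MvPolynomial (Fin 2) ℂ →ₗ[ℂ] ℂ :=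
  LinearMap.mk₂ ℂ (fun Q R => coeff 0 (apolar (Q * R) P))
    (fun Q₁ Q₂ R => by simp only [add_mul, apolar_add_left, MvPolynomial.coeff_add])
    (fun c Q R => by
      simp only [smul_mul_assoc, apolar_smul_left, MvPolynomial.coeff_smul, smul_eq_mul])
    (fun Q R₁ R₂ => by simp only [mul_add, apolar_add_left, MvPolynomial.coeff_add])
    (fun c Q R => by
      simp only [mul_smul_comm, apolar_smul_left, MvPolynomial.coeff_smul, smul_eq_mul])

lemma bform_apply (P Q R : MvPolynomial (Fin 2) ℂ) :
    bform P Q R = coeff 0 (apolar (Q * R) P) := rfl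

/-- the restriction of the pairing to homogeneous components -/
def bformRes (P : MvPolynomial (Fin 2) ℂ) (d e : ℕ) : HS d →ₗ[ℂ] HS e →ₗ[ℂ] ℂ :=
  (bform P).domRestrict₁₂ (HS d) (HS e)

lemma finrank_comap_subtype_ker (P : MvPolynomial (Fin 2) ℂ) (e : ℕ) :
    Module.finrank ℂ
      (Submodule.comap (HS e).subtype (LinearMap.ker (apolarLM P))) = annDim P e := by
  have h : Submodule.comap (HS e).subtype (LinearMap.ker (apolarLM P)) =
      Submodule.comap (HS e).subtype (annComp P e) := by
    ext x
    simp only [Submodule.mem_comap, annComp, Submodule.mem_inf]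
    exact ⟨fun hx => ⟨x.2, hx⟩, fun hx => hx.2⟩
  rw [h]
  exact LinearEquiv.finrank_eq (Submodule.comapSubtypeEquivOfLe inf_le_left)

lemma ker_bformRes {P : MvPolynomial (Fin 2) ℂ} {l : ℕ} (hP : P.IsHomogeneous l)
    (d : ℕ) (hdl : d ≤ l) :
    LinearMap.ker (bformRes P d (l - d)) =
      Submodule.comap (HS d).subtype (LinearMap.ker (apolarLM P)) := by
  ext Q
  simp only [LinearMap.mem_ker, Submodule.mem_comap, apolarLM_apply, Submodule.subtype_apply]
  constructor
  · intro h
    by_contra hS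
    have hhom : (apolar (Q : MvPolynomial (Fin 2) ℂ) P).IsHomogeneous (l - d) :=
      apolar_isHomogeneous ((mem_homogeneousSubmodule _ _).mp Q.2) hP
    obtain ⟨R, hR, hne⟩ := exists_apolar_ne_zero hhom hS
    have := congrFun (congrArg DFunLike.coe h) ⟨R, (mem_homogeneousSubmodule _ _).mpr hR⟩
    simp only [LinearMap.zero_apply] at this
    rw [bformRes, LinearMap.domRestrict₁₂_apply, bform_apply, apolar_mul'] at this
    exact hne this
  · intro h
    apply LinearMap.ext
    intro R
    rw [bformRes, LinearMap.domRestrict₁₂_apply, bform_apply, apolar_mul', h,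
      apolar_zero_right]
    simp

lemma ker_bformRes_flip {P : MvPolynomial (Fin 2) ℂ} {l : ℕ} (hP : P.IsHomogeneous l)
    (d : ℕ) (hdl : d ≤ l) :
    LinearMap.ker ((bformRes P d (l - d)).flip) =
      Submodule.comap (HS (l - d)).subtype (LinearMap.ker (apolarLM P)) := by
  have hld : l - (l - d) = d := by omega
  ext R
  simp only [LinearMap.mem_ker, Submodule.mem_comap, apolarLM_apply, Submodule.subtype_apply]
  constructor
  · intro h
    by_contra hS
    have hhom : (apolar (R : MvPolynomial (Fin 2) ℂ) P).IsHomogeneous d := by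
      have := apolar_isHomogeneous ((mem_homogeneousSubmodule _ _).mp R.2) hP
      rwa [hld] at this
    obtain ⟨Q, hQ, hne⟩ := exists_apolar_ne_zero hhom hS
    have := congrFun (congrArg DFunLike.coe h) ⟨Q, (mem_homogeneousSubmodule _ _).mpr hQ⟩
    simp only [LinearMap.zero_apply] at this
    rw [LinearMap.flip_apply, bformRes, LinearMap.domRestrict₁₂_apply, bform_apply,
      apolar_mul] at this
    exact hne this
  · intro h
    apply LinearMap.ext
    intro Q
    rw [LinearMap.flip_apply, bformRes, LinearMap.domRestrict₁₂_apply, bform_apply,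
      apolar_mul, h, apolar_zero_right]
    simp

lemma finrank_range_flip {V W : Type} [AddCommGroup V] [Module ℂ V] [AddCommGroup W]
    [Module ℂ W] [FiniteDimensional ℂ W] (B : V →ₗ[ℂ] W →ₗ[ℂ] ℂ) :
    Module.finrank ℂ (LinearMap.range B.flip) = Module.finrank ℂ (LinearMap.range B) := by
  have hcomp : B.flip = B.dualMap.comp (Module.Dual.eval ℂ W) := rfl
  have hrange : LinearMap.range B.flip = LinearMap.range B.dualMap := by
    rw [hcomp, LinearMap.range_comp]
    have : LinearMap.range (Module.Dual.eval ℂ W) = ⊤ := by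
      rw [← Module.evalEquiv_toLinearMap, LinearEquiv.range]
    rw [this, Submodule.map_top]
  rw [hrange]
  exact LinearMap.finrank_range_dualMap_eq_finrank_range B

lemma annDim_symm {P : MvPolynomial (Fin 2) ℂ} {l : ℕ} (hP : P.IsHomogeneous l)
    (d : ℕ) (hdl : d ≤ l) :
    annDim P d + (l - d + 1) = annDim P (l - d) + (d + 1) := by
  set B := bformRes P d (l - d)
  have h1 : Module.finrank ℂ (LinearMap.range B) + Module.finrank ℂ (LinearMap.ker B) =
      d + 1 := by
    rw [LinearMap.finrank_range_add_finrank_ker B, finrank_homog]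
  have h2 : Module.finrank ℂ (LinearMap.range B.flip) +
      Module.finrank ℂ (LinearMap.ker B.flip) = l - d + 1 := by
    rw [LinearMap.finrank_range_add_finrank_ker B.flip, finrank_homog]
  have h3 : Module.finrank ℂ (LinearMap.ker B) = annDim P d := by
    rw [ker_bformRes hP d hdl, finrank_comap_subtype_ker]
  have h4 : Module.finrank ℂ (LinearMap.ker B.flip) = annDim P (l - d) := by
    rw [ker_bformRes_flip hP d hdl, finrank_comap_subtype_ker]
  have h5 := finrank_range_flip B
  omega

set_option maxHeartbeats 1000000 in
lemma coker_eq_annDim {P : MvPolynomial (Fin 2) ℂ} {l : ℕ} (hP : P.IsHomogeneous l)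
    (d : ℕ) (hdl : d ≤ l) :
    Module.finrank ℂ (ApolarCoker P l d) = annDim P (l - d) := by
  have hdef : apolarImage P l d =
      Submodule.comap (HS (l - d)).subtype (Submodule.map (apolarLM P) (HS d)) := rfl
  have hle : Submodule.map (apolarLM P) (HS d) ≤ HS (l - d) := by
    rw [Submodule.map_le_iff_le_comap]
    intro Q hQ
    rw [Submodule.mem_comap, apolarLM_apply]
    exact apolar_mem_homog ((mem_homogeneousSubmodule _ _).mp hQ) hP
  have himg : Module.finrank ℂ (apolarImage P l d) =
      Module.finrank ℂ (Submodule.map (apolarLM P) (HS d)) := by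
    rw [hdef]
    exact LinearEquiv.finrank_eq (Submodule.comapSubtypeEquivOfLe hle)
  set φ : HS d →ₗ[ℂ] MvPolynomial (Fin 2) ℂ := (apolarLM P).comp (HS d).subtype with hφ
  have hrange : LinearMap.range φ = Submodule.map (apolarLM P) (HS d) := by
    rw [hφ, LinearMap.range_comp, Submodule.range_subtype]
  have hker : LinearMap.ker φ = Submodule.comap (HS d).subtype (LinearMap.ker (apolarLM P)) := by
    rw [hφ, LinearMap.ker_comp]
  have h1 : Module.finrank ℂ (Submodule.map (apolarLM P) (HS d)) + annDim P d = d + 1 := by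
    rw [← hrange, ← finrank_comap_subtype_ker P d, ← hker,
      LinearMap.finrank_range_add_finrank_ker φ, finrank_homog]
  have hfd : FiniteDimensional ℂ (Submodule.map (apolarLM P) (HS d)) :=
    Submodule.finiteDimensional_of_le hle
  have h2 : Module.finrank ℂ (ApolarCoker P l d) + Module.finrank ℂ (apolarImage P l d) =
      l - d + 1 := by
    rw [Submodule.finrank_quotient_add_finrank (apolarImage P l d), finrank_homog]
  have h3 := annDim_symm hP d hdl
  omega

end

-- ================= PART 5 : d1 facts =================

noncomputable section

open Module

lemma d1_def (P : MvPolynomial (Fin 2) ℂ) :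
    d1 P = sInf {d | ∃ Q : MvPolynomial (Fin 2) ℂ,
      Q ≠ 0 ∧ Q.IsHomogeneous d ∧ apolar Q P = 0} := rfl

lemma annSet_mem_half {P : MvPolynomial (Fin 2) ℂ} {l : ℕ} (hP : P.IsHomogeneous l) :
    (l / 2 + 1) ∈ {d | ∃ Q : MvPolynomial (Fin 2) ℂ,
      Q ≠ 0 ∧ Q.IsHomogeneous d ∧ apolar Q P = 0} := by
  set e := l / 2 + 1 with he
  set φ : HS e →ₗ[ℂ] MvPolynomial (Fin 2) ℂ := (apolarLM P).comp (HS e).subtype with hφ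
  have hrle : LinearMap.range φ ≤ HS (l - e) := by
    rintro _ ⟨Q, rfl⟩
    rw [hφ, LinearMap.comp_apply, apolarLM_apply]
    exact apolar_mem_homog ((mem_homogeneousSubmodule _ _).mp Q.2) hP
  have hr : Module.finrank ℂ (LinearMap.range φ) ≤ l - e + 1 := by
    rw [← finrank_homog (l - e)]
    exact Submodule.finrank_mono hrle
  have hrn := LinearMap.finrank_range_add_finrank_ker φ
  rw [finrank_homog e] at hrn
  have hkpos : 0 < Module.finrank ℂ (LinearMap.ker φ) := by omega
  have hkne : LinearMap.ker φ ≠ ⊥ := by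
    intro hcon
    rw [hcon, finrank_bot] at hkpos
    omega
  obtain ⟨Q, hQmem, hQne⟩ := Submodule.exists_mem_ne_zero_of_ne_bot hkne
  refine ⟨(Q : MvPolynomial (Fin 2) ℂ), ?_, (mem_homogeneousSubmodule _ _).mp Q.2, ?_⟩
  · intro hcon
    exact hQne (Subtype.ext hcon)
  · have := LinearMap.mem_ker.mp hQmem
    rw [hφ, LinearMap.comp_apply, apolarLM_apply] at this
    exact this

lemma d1_le_half {P : MvPolynomial (Fin 2) ℂ} {l : ℕ} (hP : P.IsHomogeneous l) :
    d1 P ≤ l / 2 + 1 :=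
  Nat.sInf_le (annSet_mem_half hP)

lemma d1_mem {P : MvPolynomial (Fin 2) ℂ} {l : ℕ} (hP : P.IsHomogeneous l) :
    ∃ Q : MvPolynomial (Fin 2) ℂ,
      Q ≠ 0 ∧ Q.IsHomogeneous (d1 P) ∧ apolar Q P = 0 :=
  Nat.sInf_mem (⟨l / 2 + 1, annSet_mem_half hP⟩ :
    Set.Nonempty {d | ∃ Q : MvPolynomial (Fin 2) ℂ,
      Q ≠ 0 ∧ Q.IsHomogeneous d ∧ apolar Q P = 0})

lemma eq_C_of_isHomogeneous_zero {Q : MvPolynomial (Fin 2) ℂ} (h : Q.IsHomogeneous 0) :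
    Q = C (MvPolynomial.coeff 0 Q) := by
  apply MvPolynomial.ext
  intro m
  by_cases hm : m = 0
  · subst hm; simp
  · rw [h.coeff_eq_zero ?_, MvPolynomial.coeff_C, if_neg (fun hc => hm hc.symm)]
    intro hdeg
    apply hm
    rw [degree_two] at hdeg
    have h0 : m 0 = 0 ∧ m 1 = 0 := by omega
    rw [decomp_two m, h0.1, h0.2]
    simp

lemma d1_pos {P : MvPolynomial (Fin 2) ℂ} {l : ℕ} (hP : P.IsHomogeneous l) (h0 : P ≠ 0) :
    1 ≤ d1 P := by
  by_contra hcon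
  push_neg at hcon
  interval_cases h : d1 P
  obtain ⟨Q, hQne, hQhom, hQap⟩ := d1_mem hP
  rw [h] at hQhom
  have hC : Q = C (coeff 0 Q) := eq_C_of_isHomogeneous_zero hQhom
  rw [hC, apolar_C] at hQap
  rcases smul_eq_zero.mp hQap with hc | hc
  · exact hQne (by rw [hC, hc, map_zero])
  · exact h0 hc

lemma annComp_eq_bot_of_lt_d1 {P : MvPolynomial (Fin 2) ℂ} {e : ℕ} (he : e < d1 P) :
    annComp P e = ⊥ := by
  rw [eq_bot_iff]
  intro x hx
  rw [Submodule.mem_bot]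
  by_contra hne
  obtain ⟨hx1, hx2⟩ := Submodule.mem_inf.mp hx
  have : e ∈ {d | ∃ Q : MvPolynomial (Fin 2) ℂ,
      Q ≠ 0 ∧ Q.IsHomogeneous d ∧ apolar Q P = 0} :=
    ⟨x, hne, (mem_homogeneousSubmodule _ _).mp hx1, by
      have := LinearMap.mem_ker.mp hx2; rwa [apolarLM_apply] at this⟩
  have hle : d1 P ≤ e := by rw [d1_def]; exact Nat.sInf_le this
  omega

lemma annComp_fd (P : MvPolynomial (Fin 2) ℂ) (e : ℕ) :
    FiniteDimensional ℂ (annComp P e) :=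
  Submodule.finiteDimensional_of_le (inf_le_left : annComp P e ≤ HS e)

lemma annDim_lower {P : MvPolynomial (Fin 2) ℂ} {l : ℕ} (hP : P.IsHomogeneous l)
    {e : ℕ} (he : d1 P ≤ e) : e + 1 ≤ annDim P e + d1 P := by
  obtain ⟨Q₁, hQ₁ne, hQ₁hom, hQ₁ap⟩ := d1_mem hP
  set r := d1 P
  have hmem : ∀ H : HS (e - r), (Q₁ * (H : MvPolynomial (Fin 2) ℂ)) ∈ annComp P e := by
    intro H
    rw [annComp, Submodule.mem_inf]
    constructor
    · rw [mem_homogeneousSubmodule]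
      have := hQ₁hom.mul ((mem_homogeneousSubmodule _ _).mp H.2)
      rwa [Nat.add_sub_cancel' he] at this
    · rw [LinearMap.mem_ker, apolarLM_apply, apolar_mul', hQ₁ap, apolar_zero_right]
  set ψ : HS (e - r) →ₗ[ℂ] annComp P e :=
    LinearMap.codRestrict (annComp P e) ((LinearMap.mulLeft ℂ Q₁).comp (HS (e - r)).subtype)
      hmem with hψ
  have hinj : Function.Injective ψ := by
    intro x y hxy
    have h' : Q₁ * (x : MvPolynomial (Fin 2) ℂ) = Q₁ * (y : MvPolynomial (Fin 2) ℂ) :=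
      congrArg Subtype.val hxy
    exact Subtype.val_injective (mul_right_injective₀ hQ₁ne h')
  have := annComp_fd P e
  have hle := LinearMap.finrank_le_finrank_of_injective hinj
  rw [finrank_homog (e - r)] at hle
  unfold annDim
  omega

end

-- ================= PART 6 : linear forms and kernels of derivations =================

noncomputable section

open Module

lemma coeff_pd (i : Fin 2) (f : MvPolynomial (Fin 2) ℂ) (ν : Fin 2 →₀ ℕ) :
    coeff ν (pd i f) = ((ν i + 1 : ℕ) : ℂ) * coeff (ν + Finsupp.single i 1) f := by
  induction f using MvPolynomial.induction_on' with
  | monomial s a =>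
      have hpd : pd i (monomial s a) = monomial (s - Finsupp.single i 1) (a * s i) := by
        simp [pd, pderiv_monomial]
      rw [hpd, MvPolynomial.coeff_monomial, MvPolynomial.coeff_monomial]
      by_cases hs : s = ν + Finsupp.single i 1
      · rw [if_pos hs, if_pos]
        · subst hs
          simp [Finsupp.add_apply, Finsupp.single_apply, mul_comm]
        · subst hs
          rw [add_tsub_cancel_right]
      · rw [if_neg hs, mul_zero]
        by_cases hsi : s i = 0
        · have : a * ((s i : ℕ) : ℂ) = 0 := by rw [hsi]; simp
          rw [this]
          simp
        · rw [if_neg]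
          intro hcon
          apply hs
          have hle : Finsupp.single i 1 ≤ s := by
            rw [Finsupp.single_le_iff]
            omega
          rw [← hcon, tsub_add_cancel_of_le hle]
  | add p q hp hq =>
      rw [map_add, MvPolynomial.coeff_add, MvPolynomial.coeff_add, hp, hq, mul_add]

lemma apolar_X (i : Fin 2) (S : MvPolynomial (Fin 2) ℂ) : apolar (X i) S = pd i S := by
  have hX : (X i : MvPolynomial (Fin 2) ℂ) = monomial (Finsupp.single i 1) 1 := rfl
  rw [apolar, hX, diffOp_monomial]
  fin_cases i <;>
    simp [Finsupp.single_apply, Module.End.mul_apply, Module.End.one_apply]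

lemma apolar_L (a : ℂ) (S : MvPolynomial (Fin 2) ℂ) :
    apolar (C a * X 0 + X 1) S = a • pd 0 S + pd 1 S := by
  rw [apolar_add_left, apolar_mul, apolar_X, apolar_C, apolar_X]

lemma homog_eq_zero_of_apolar_L {a : ℂ} {m : ℕ} {S : MvPolynomial (Fin 2) ℂ}
    (hS : S.IsHomogeneous m)
    (hD : apolar (C a * X 0 + X 1) S = 0)
    (h0 : coeff (Finsupp.single (0 : Fin 2) m) S = 0) : S = 0 := by
  have key : ∀ j : ℕ, j ≤ m →
      coeff (Finsupp.single (0:Fin 2) (m - j) + Finsupp.single (1:Fin 2) j) S = 0 := by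
    intro j
    induction j with
    | zero => intro _; simpa using h0
    | succ j ih =>
        intro hj1
        have hj : j ≤ m := by omega
        have hc := ih hj
        set ν : Fin 2 →₀ ℕ :=
          Finsupp.single (0:Fin 2) (m - 1 - j) + Finsupp.single (1:Fin 2) j with hν
        have hco : coeff ν (apolar (C a * X 0 + X 1) S) = 0 := by rw [hD]; simp
        rw [apolar_L, MvPolynomial.coeff_add, MvPolynomial.coeff_smul,
          coeff_pd, coeff_pd] at hco
        have hν0 : ν + Finsupp.single (0:Fin 2) 1 =
            Finsupp.single (0:Fin 2) (m - j) + Finsupp.single (1:Fin 2) j := by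
          rw [hν, add_right_comm, ← Finsupp.single_add]
          congr 2
          omega
        have hν1 : ν + Finsupp.single (1:Fin 2) 1 =
            Finsupp.single (0:Fin 2) (m - (j+1)) + Finsupp.single (1:Fin 2) (j+1) := by
          rw [hν, add_assoc, ← Finsupp.single_add]
          congr 2
          omega
        have hν1val : (ν 1 : ℕ) = j := by
          rw [hν]
          simp [Finsupp.add_apply, Finsupp.single_apply]
        rw [hν0, hν1, hc, mul_zero, smul_zero, zero_add, hν1val] at hco
        have : ((j + 1 : ℕ) : ℂ) ≠ 0 := Nat.cast_ne_zero.mpr (by omega)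
        exact (mul_eq_zero.mp hco).resolve_left this
  rw [homog_rep hS]
  apply Finset.sum_eq_zero
  intro j _
  have := key (j : ℕ) (by omega)
  rw [hexp]
  rw [this]
  simp

lemma N_pow_homog (a : ℂ) (m : ℕ) :
    ((X 0 - C a * X 1 : MvPolynomial (Fin 2) ℂ) ^ m).IsHomogeneous m := by
  have h1 : (X 0 - C a * X 1 : MvPolynomial (Fin 2) ℂ).IsHomogeneous 1 := by
    apply MvPolynomial.IsHomogeneous.sub (isHomogeneous_X _ 0)
    have := (isHomogeneous_C (Fin 2) a).mul (isHomogeneous_X ℂ 1)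
    rwa [zero_add] at this
  have := h1.pow m
  rwa [one_mul] at this

lemma apolar_L_N_pow (a : ℂ) (m : ℕ) :
    apolar (C a * X 0 + X 1) ((X 0 - C a * X 1 : MvPolynomial (Fin 2) ℂ) ^ m) = 0 := by
  rw [apolar_L]
  have hp0 : (pderiv (R := ℂ) (0:Fin 2)) ((X 0 - C a * X 1 : MvPolynomial (Fin 2) ℂ) ^ m) =
      m • ((X 0 - C a * X 1 : MvPolynomial (Fin 2) ℂ) ^ (m-1) * 1) := by
    rw [Derivation.leibniz_pow]
    congr 1
    rw [smul_eq_mul]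
    congr 1
    rw [map_sub]
    simp [pderiv_X]
  have hp1 : (pderiv (R := ℂ) (1:Fin 2)) ((X 0 - C a * X 1 : MvPolynomial (Fin 2) ℂ) ^ m) =
      m • ((X 0 - C a * X 1 : MvPolynomial (Fin 2) ℂ) ^ (m-1) * (-C a)) := by
    rw [Derivation.leibniz_pow]
    congr 1
    rw [smul_eq_mul]
    congr 1
    rw [map_sub]
    simp [pderiv_X]
  rw [show pd 0 ((X 0 - C a * X 1 : MvPolynomial (Fin 2) ℂ) ^ m) =
        (pderiv (R := ℂ) (0:Fin 2)) ((X 0 - C a * X 1 : MvPolynomial (Fin 2) ℂ) ^ m) from rfl,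
      show pd 1 ((X 0 - C a * X 1 : MvPolynomial (Fin 2) ℂ) ^ m) =
        (pderiv (R := ℂ) (1:Fin 2)) ((X 0 - C a * X 1 : MvPolynomial (Fin 2) ℂ) ^ m) from rfl,
      hp0, hp1, mul_one, smul_comm a m, MvPolynomial.smul_eq_C_mul, ← smul_add]
  have hz : C a * (X 0 - C a * X 1 : MvPolynomial (Fin 2) ℂ) ^ (m-1) +
      (X 0 - C a * X 1 : MvPolynomial (Fin 2) ℂ) ^ (m-1) * (-C a) = 0 := by ring
  rw [hz, smul_zero]

lemma coeff_N_pow_top (a : ℂ) (m : ℕ) :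
    coeff (Finsupp.single (0:Fin 2) m) ((X 0 - C a * X 1 : MvPolynomial (Fin 2) ℂ) ^ m) = 1 := by
  induction m with
  | zero => simp
  | succ m ih =>
      rw [pow_succ, mul_sub]
      rw [MvPolynomial.coeff_sub]
      have h1 : coeff (Finsupp.single (0:Fin 2) (m+1))
          ((X 0 - C a * X 1 : MvPolynomial (Fin 2) ℂ) ^ m * X 0) = 1 := by
        have hsingle : Finsupp.single (0:Fin 2) (m+1) =
            Finsupp.single (0:Fin 2) m + Finsupp.single (0:Fin 2) 1 := by
          rw [← Finsupp.single_add]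
        rw [hsingle, MvPolynomial.coeff_mul_X, ih]
      have h2 : coeff (Finsupp.single (0:Fin 2) (m+1))
          ((X 0 - C a * X 1 : MvPolynomial (Fin 2) ℂ) ^ m * (C a * X 1)) = 0 := by
        rw [show ((X 0 - C a * X 1 : MvPolynomial (Fin 2) ℂ) ^ m * (C a * X 1)) =
          ((X 0 - C a * X 1 : MvPolynomial (Fin 2) ℂ) ^ m * C a) * X 1 by ring]
        rw [MvPolynomial.coeff_mul_X']
        rw [if_neg]
        simp [Finsupp.support_single_ne_zero]
      rw [h1, h2, sub_zero]

end

-- ================= PART 6b : N-power representation and avoidance =================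

noncomputable section

open Module

lemma term_eq (a : ℂ) (k t c : ℕ) :
    (X 0 : MvPolynomial (Fin 2) ℂ) ^ k * (-(C a * X 1)) ^ t * (c : MvPolynomial (Fin 2) ℂ) =
      ((-a) ^ t * (c : ℂ)) •
        monomial (Finsupp.single (0:Fin 2) k + Finsupp.single (1:Fin 2) t) 1 := by
  rw [MvPolynomial.smul_eq_C_mul]
  rw [show (-(C a * X 1) : MvPolynomial (Fin 2) ℂ) = C (-a) * X 1 by rw [map_neg]; ring]
  rw [mul_pow, ← map_pow]
  rw [MvPolynomial.X_pow_eq_monomial, MvPolynomial.X_pow_eq_monomial]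
  rw [show ((c : ℕ) : MvPolynomial (Fin 2) ℂ) = C ((c : ℕ) : ℂ) from (map_natCast C c).symm]
  rw [MvPolynomial.C_mul_monomial, MvPolynomial.C_mul_monomial]
  rw [MvPolynomial.monomial_mul]
  rw [show (monomial (Finsupp.single (0:Fin 2) k + Finsupp.single (1:Fin 2) t)) (1 * ((-a)^t * 1)) * C ((c:ℕ):ℂ) =
    C ((c:ℕ):ℂ) * (monomial (Finsupp.single (0:Fin 2) k + Finsupp.single (1:Fin 2) t)) (1 * ((-a)^t * 1)) from mul_comm _ _]
  rw [MvPolynomial.C_mul_monomial]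
  congr 1
  ring

lemma N_pow_rep (a : ℂ) (m : ℕ) :
    (X 0 - C a * X 1 : MvPolynomial (Fin 2) ℂ) ^ m =
      ∑ j : Fin (m + 1),
        ((-a) ^ (j:ℕ) * (m.choose (j:ℕ) : ℂ)) • monomial (hexp m j) 1 := by
  rw [sub_eq_add_neg, add_pow, Finset.sum_range]
  apply Fintype.sum_equiv Fin.revPerm
  intro k
  rw [Fin.revPerm_apply]
  have hkm : (k : ℕ) ≤ m := by omega
  have hrev : ((Fin.rev k : Fin (m+1)) : ℕ) = m - (k : ℕ) := by
    rw [Fin.val_rev]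
    omega
  rw [term_eq a (k : ℕ) (m - (k : ℕ)) (m.choose (k : ℕ))]
  rw [hrev]
  have hch : m.choose (m - (k:ℕ)) = m.choose (k:ℕ) := Nat.choose_symm hkm
  have hex : hexp m (Fin.rev k) = Finsupp.single (0:Fin 2) (k:ℕ) + Finsupp.single (1:Fin 2) (m - (k:ℕ)) := by
    rw [hexp]
    rw [hrev]
    congr 1
    congr 1
    omega
  rw [hex, hch]

lemma exists_N_not_mem {m : ℕ} (V : Submodule ℂ (MvPolynomial (Fin 2) ℂ))
    (hV : V ≤ HS m) (hdim : Module.finrank ℂ V < m + 1) :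
    ∃ a : ℂ, (X 0 - C a * X 1 : MvPolynomial (Fin 2) ℂ) ^ m ∉ V := by
  by_contra hcon
  push_neg at hcon
  set V' := Submodule.comap (HS m).subtype V with hV'def
  have hV' : V' < ⊤ := by
    rcases lt_or_eq_of_le (le_top : V' ≤ ⊤) with h | h
    · exact h
    · exfalso
      have hmap : Submodule.map (HS m).subtype V' = V := by
        rw [hV'def, Submodule.map_comap_subtype, inf_eq_right.mpr hV]
      have heq : Module.finrank ℂ V = m + 1 := by
        rw [← hmap, h, Submodule.map_top, Submodule.range_subtype, finrank_homog]
      omega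
  obtain ⟨f, hfne, hfmap⟩ :=
    Submodule.exists_dual_map_eq_bot_of_lt_top hV' inferInstance
  have hf0 : ∀ x : HS m, (x : MvPolynomial (Fin 2) ℂ) ∈ V → f x = 0 := by
    intro x hx
    have : f x ∈ Submodule.map f V' := Submodule.mem_map_of_mem hx
    rw [hfmap, Submodule.mem_bot] at this
    exact this
  -- evaluate f on the powers of linear forms
  have hval : ∀ a : ℂ,
      (∑ j : Fin (m+1), ((-a) ^ (j:ℕ) * (m.choose (j:ℕ) : ℂ)) * f (homBasis m j)) = 0 := by
    intro a
    have hmem : (X 0 - C a * X 1 : MvPolynomial (Fin 2) ℂ) ^ m ∈ HS m :=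
      (mem_homogeneousSubmodule _ _).mpr (N_pow_homog a m)
    have hx : (⟨(X 0 - C a * X 1 : MvPolynomial (Fin 2) ℂ) ^ m, hmem⟩ : HS m) =
        ∑ j : Fin (m+1), ((-a) ^ (j:ℕ) * (m.choose (j:ℕ) : ℂ)) • homBasis m j := by
      apply Subtype.ext
      push_cast [homBasis_apply, hvec]
      exact N_pow_rep a m
    have h0 : f (⟨(X 0 - C a * X 1 : MvPolynomial (Fin 2) ℂ) ^ m, hmem⟩ : HS m) = 0 :=
      hf0 _ (hcon a)
    rw [hx, map_sum] at h0
    simp only [map_smul, smul_eq_mul] at h0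
    exact h0
  -- the polynomial q vanishes identically
  set q : Polynomial ℂ := ∑ j : Fin (m+1),
    Polynomial.C ((-1 : ℂ) ^ (j:ℕ) * (m.choose (j:ℕ) : ℂ) * f (homBasis m j)) *
      Polynomial.X ^ (j:ℕ) with hq
  have hqeval : ∀ a : ℂ, q.eval a = 0 := by
    intro a
    rw [hq]
    rw [Polynomial.eval_finset_sum]
    rw [← hval a]
    apply Finset.sum_congr rfl
    intro j _
    simp only [Polynomial.eval_mul, Polynomial.eval_C, Polynomial.eval_pow, Polynomial.eval_X]
    rw [neg_pow]
    ring
  have hq0 : q = 0 := Polynomial.funext (fun a => by rw [hqeval a]; simp)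
  -- extract coefficients
  have hcoeff : ∀ j₀ : Fin (m+1), f (homBasis m j₀) = 0 := by
    intro j₀
    have hc : q.coeff (j₀ : ℕ) = 0 := by rw [hq0]; simp
    rw [hq, Polynomial.finset_sum_coeff] at hc
    rw [Finset.sum_eq_single j₀] at hc
    · rw [Polynomial.coeff_C_mul, Polynomial.coeff_X_pow, if_pos rfl, mul_one] at hc
      have h1 : ((-1 : ℂ) ^ (j₀:ℕ)) ≠ 0 := by
        apply pow_ne_zero
        norm_num
      have h2 : ((m.choose (j₀:ℕ) : ℂ)) ≠ 0 := by
        rw [Nat.cast_ne_zero]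
        exact Nat.choose_pos (by omega) |>.ne'
      rcases mul_eq_zero.mp hc with h | h
      · rcases mul_eq_zero.mp h with h' | h'
        · exact absurd h' h1
        · exact absurd h' h2
      · exact h
    · intro b _ hb
      rw [Polynomial.coeff_C_mul, Polynomial.coeff_X_pow, if_neg, mul_zero]
      intro hcontra
      exact hb (Fin.ext hcontra.symm)
    · intro hj₀
      exact absurd (Finset.mem_univ _) hj₀
  exact hfne ((homBasis m).ext (fun j => by rw [hcoeff j]; simp))

end

-- ================= PART 7 : the step lemma and the dimension formula =================

noncomputable section

open Module

lemma annDim_step {P : MvPolynomial (Fin 2) ℂ} {l : ℕ} (hP : P.IsHomogeneous l)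
    {j : ℕ} (hj1 : 1 ≤ j) (hj2 : 2 * j ≤ l + 1) :
    annDim P j ≤ annDim P (j - 1) + 1 := by
  set m := l - (j - 1) with hm
  -- the image of the degree-(j-1) apolar map
  set V := Submodule.map (apolarLM P) (HS (j - 1)) with hV
  have hVle : V ≤ HS m := by
    rw [hV, Submodule.map_le_iff_le_comap]
    intro Q hQ
    rw [Submodule.mem_comap, apolarLM_apply]
    exact apolar_mem_homog ((mem_homogeneousSubmodule _ _).mp hQ) hP
  have hVdim : Module.finrank ℂ V < m + 1 := by
    have h1 : Module.finrank ℂ V ≤ j := by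
      have : V = LinearMap.range ((apolarLM P).comp (HS (j-1)).subtype) := by
        rw [hV, LinearMap.range_comp, Submodule.range_subtype]
      rw [this]
      have := LinearMap.finrank_range_le ((apolarLM P).comp (HS (j-1)).subtype)
      rw [finrank_homog (j-1)] at this
      omega
    omega
  obtain ⟨a, hNa⟩ := exists_N_not_mem V hVle hVdim
  set L : MvPolynomial (Fin 2) ℂ := C a * X 0 + X 1 with hL
  have hL1 : L.IsHomogeneous 1 := by
    rw [hL]
    apply MvPolynomial.IsHomogeneous.add ?_ (isHomogeneous_X _ 1)
    have := (isHomogeneous_C (Fin 2) a).mul (isHomogeneous_X ℂ 0)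
    rwa [zero_add] at this
  have hLc : coeff (Finsupp.single (1:Fin 2) 1) L = 1 := by
    rw [hL]
    simp [MvPolynomial.coeff_add, MvPolynomial.coeff_C_mul, MvPolynomial.coeff_X',
      Finsupp.single_eq_single_iff]
  have hLne : L ≠ 0 := by
    intro h
    rw [h] at hLc
    simp at hLc
  set M := Submodule.map (LinearMap.mulLeft ℂ L) (HS (j - 1)) with hM
  have hMle : M ≤ HS j := by
    rw [hM, Submodule.map_le_iff_le_comap]
    intro Q hQ
    rw [Submodule.mem_comap]
    have : (L * Q).IsHomogeneous j := by
      have := hL1.mul ((mem_homogeneousSubmodule _ _).mp hQ)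
      rwa [show 1 + (j - 1) = j by omega] at this
    exact (mem_homogeneousSubmodule _ _).mpr this
  have hMdim : Module.finrank ℂ M = j := by
    rw [hM, ← LinearEquiv.finrank_eq
      (Submodule.equivMapOfInjective (LinearMap.mulLeft ℂ L)
        (fun x y hxy => mul_right_injective₀ hLne hxy) (HS (j-1))), finrank_homog]
    omega
  set W := annComp P j with hW
  have hWle : W ≤ HS j := inf_le_left
  -- the key containment
  set T := HS (j - 1) ⊓ Submodule.comap (LinearMap.mulLeft ℂ L) (LinearMap.ker (apolarLM P))
    with hT
  have hWM : W ⊓ M ≤ Submodule.map (LinearMap.mulLeft ℂ L) T := by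
    rintro u ⟨huW, huM⟩
    obtain ⟨Q, hQ, rfl⟩ := huM
    refine ⟨Q, ⟨hQ, ?_⟩, rfl⟩
    show LinearMap.mulLeft ℂ L Q ∈ LinearMap.ker (apolarLM P)
    have huW' : L * Q ∈ annComp P j := huW
    exact (Submodule.mem_inf.mp huW').2
  have hTann : T ≤ annComp P (j - 1) := by
    rintro Q ⟨hQh, hQk⟩
    have hQk' : apolar (L * Q) P = 0 := by
      have : LinearMap.mulLeft ℂ L Q ∈ LinearMap.ker (apolarLM P) := hQk
      rw [LinearMap.mem_ker] at this
      rw [← apolarLM_apply]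
      exact this
    clear hQk
    set S := apolar Q P with hS
    have hSV : S ∈ V := by
      rw [hV]
      refine ⟨Q, hQh, ?_⟩
      rw [apolarLM_apply]
    have hShom : S.IsHomogeneous m := (mem_homogeneousSubmodule _ _).mp (hVle hSV)
    have hDS : apolar L S = 0 := by
      rw [hS, ← apolar_mul, hQk']
    set c := coeff (Finsupp.single (0:Fin 2) m) S with hc
    have hS' : S - c • (X 0 - C a * X 1 : MvPolynomial (Fin 2) ℂ) ^ m = 0 := by
      apply homog_eq_zero_of_apolar_L (a := a) (m := m)
      · apply MvPolynomial.IsHomogeneous.sub hShom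
        rw [MvPolynomial.smul_eq_C_mul]
        exact (N_pow_homog a m).C_mul c
      · rw [apolar_sub_right, hDS, apolar_smul_right, apolar_L_N_pow a m, smul_zero,
          sub_zero]
      · rw [MvPolynomial.coeff_sub, MvPolynomial.coeff_smul, coeff_N_pow_top, ← hc]
        simp
    have hSc : S = c • (X 0 - C a * X 1 : MvPolynomial (Fin 2) ℂ) ^ m := by
      rw [← sub_eq_zero]
      exact hS'
    have hc0 : c = 0 := by
      by_contra hcne
      apply hNa
      have : (X 0 - C a * X 1 : MvPolynomial (Fin 2) ℂ) ^ m = c⁻¹ • S := by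
        rw [hSc, smul_smul, inv_mul_cancel₀ hcne, one_smul]
      rw [this]
      exact Submodule.smul_mem _ _ hSV
    have hS0 : S = 0 := by rw [hSc, hc0, zero_smul]
    refine Submodule.mem_inf.mpr ⟨hQh, ?_⟩
    rw [LinearMap.mem_ker, apolarLM_apply, ← hS, hS0]
  -- dimension count
  have instW : FiniteDimensional ℂ W := Submodule.finiteDimensional_of_le hWle
  have instM : FiniteDimensional ℂ M := Submodule.finiteDimensional_of_le hMle
  have hsupinf := Submodule.finrank_sup_add_finrank_inf_eq W M
  have hsup : Module.finrank ℂ (W ⊔ M : Submodule ℂ (MvPolynomial (Fin 2) ℂ)) ≤ j + 1 := by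
    rw [← finrank_homog j]
    exact Submodule.finrank_mono (sup_le hWle hMle)
  have hinf : Module.finrank ℂ (W ⊓ M : Submodule ℂ (MvPolynomial (Fin 2) ℂ)) ≤
      annDim P (j - 1) := by
    have hfd : FiniteDimensional ℂ (Submodule.map (LinearMap.mulLeft ℂ L) (annComp P (j-1))) := by
      have := annComp_fd P (j-1)
      exact Module.Finite.map _ _
    have h1 : Module.finrank ℂ (Submodule.map (LinearMap.mulLeft ℂ L) (annComp P (j-1))) =
        annDim P (j - 1) :=
      (LinearEquiv.finrank_eq (Submodule.equivMapOfInjective (LinearMap.mulLeft ℂ L)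
        (fun x y hxy => mul_right_injective₀ hLne hxy) (annComp P (j-1)))).symm
    rw [← h1]
    exact Submodule.finrank_mono
      (le_trans hWM (Submodule.map_mono hTann))
  have : annDim P j = Module.finrank ℂ W := rfl
  omega

end

-- ================= PART 8 : the dimension formula and the theorem =================

noncomputable section

open Module

lemma annDim_le {P : MvPolynomial (Fin 2) ℂ} {l : ℕ} (hP : P.IsHomogeneous l)
    (hP0 : P ≠ 0) : ∀ e : ℕ, 2 * e ≤ l + 1 → annDim P e ≤ e + 1 - d1 P := by
  intro e
  induction e with
  | zero =>
      intro _
      have h1 := d1_pos hP hP0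
      have hbot : annComp P 0 = ⊥ := annComp_eq_bot_of_lt_d1 (by omega)
      rw [show annDim P 0 = Module.finrank ℂ (annComp P 0) from rfl, hbot, finrank_bot]
      omega
  | succ e ih =>
      intro h2e
      rcases lt_or_ge (e + 1) (d1 P) with hlt | hge
      · have hbot : annComp P (e+1) = ⊥ := annComp_eq_bot_of_lt_d1 hlt
        rw [show annDim P (e+1) = Module.finrank ℂ (annComp P (e+1)) from rfl, hbot,
          finrank_bot]
        omega
      · have hstep := annDim_step hP (j := e + 1) (by omega) (by omega)
        have hih := ih (by omega)
        simp only [Nat.add_sub_cancel] at hstep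
        omega

lemma annDim_eq {P : MvPolynomial (Fin 2) ℂ} {l : ℕ} (hP : P.IsHomogeneous l)
    (hP0 : P ≠ 0) {e : ℕ} (h2e : 2 * e ≤ l + 1) : annDim P e = e + 1 - d1 P := by
  rcases lt_or_ge e (d1 P) with hlt | hge
  · have hbot : annComp P e = ⊥ := annComp_eq_bot_of_lt_d1 hlt
    rw [show annDim P e = Module.finrank ℂ (annComp P e) from rfl, hbot, finrank_bot]
    omega
  · have h1 := annDim_le hP hP0 e h2e
    have h2 := annDim_lower hP hge
    omega

lemma coker_formula {P : MvPolynomial (Fin 2) ℂ} {l d : ℕ} (hP : P.IsHomogeneous l)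
    (hP0 : P ≠ 0) (hd : l / 2 ≤ d) (hdl : d ≤ l) :
    Module.finrank ℂ (ApolarCoker P l d) = l - d + 1 - d1 P := by
  rw [coker_eq_annDim hP d hdl]
  exact annDim_eq hP hP0 (by omega)

end
/-- Comparison of the level sets `P^l_{d,s}` of `P ↦ dim C_P^d` with the strata `P^l_r` of
the `d₁`-stratification (case `⌊l/2⌋ ≤ d ≤ l`). -/
theorem level_sets_large_d (l d s : ℕ) (hd : l / 2 ≤ d) (hdl : d ≤ l) :
    (0 < s → s ≤ l - d →
      {P : MvPolynomial (Fin 2) ℂ | P.IsHomogeneous l ∧ P ≠ 0 ∧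
          Module.finrank ℂ (ApolarCoker P l d) = s}
        = {P : MvPolynomial (Fin 2) ℂ | P.IsHomogeneous l ∧ P ≠ 0 ∧
            d1 P = l - d + 1 - s}) ∧
    (s = 0 →
      {P : MvPolynomial (Fin 2) ℂ | P.IsHomogeneous l ∧ P ≠ 0 ∧
          Module.finrank ℂ (ApolarCoker P l d) = s}
        = ⋃ r ∈ Set.Icc (l - d + 1) (l / 2 + 1),
            {P : MvPolynomial (Fin 2) ℂ | P.IsHomogeneous l ∧ P ≠ 0 ∧ d1 P = r}) ∧
    (l - d < s →
      {P : MvPolynomial (Fin 2) ℂ | P.IsHomogeneous l ∧ P ≠ 0 ∧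
          Module.finrank ℂ (ApolarCoker P l d) = s} = ∅) := by
  have key : ∀ P : MvPolynomial (Fin 2) ℂ, P.IsHomogeneous l → P ≠ 0 →
      Module.finrank ℂ (ApolarCoker P l d) = l - d + 1 - d1 P ∧
        1 ≤ d1 P ∧ d1 P ≤ l / 2 + 1 := by
    intro P hP hP0
    exact ⟨coker_formula hP hP0 hd hdl, d1_pos hP hP0, d1_le_half hP⟩
  refine ⟨?_, ?_, ?_⟩
  · intro hs1 hs2
    ext P
    simp only [Set.mem_setOf_eq]
    constructor
    · rintro ⟨h1, h2, h3⟩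
      obtain ⟨hk, hd1, hd2⟩ := key P h1 h2
      exact ⟨h1, h2, by omega⟩
    · rintro ⟨h1, h2, h3⟩
      obtain ⟨hk, hd1, hd2⟩ := key P h1 h2
      exact ⟨h1, h2, by omega⟩
  · intro hs0
    subst hs0
    ext P
    simp only [Set.mem_setOf_eq, Set.mem_iUnion, Set.mem_Icc, exists_prop]
    constructor
    · rintro ⟨h1, h2, h3⟩
      obtain ⟨hk, hd1, hd2⟩ := key P h1 h2
      exact ⟨d1 P, ⟨by omega, hd2⟩, h1, h2, rfl⟩
    · rintro ⟨r, ⟨hr1, hr2⟩, h1, h2, h3⟩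
      obtain ⟨hk, hd1, hd2⟩ := key P h1 h2
      exact ⟨h1, h2, by omega⟩
  · intro hs
    ext P
    simp only [Set.mem_setOf_eq, Set.mem_empty_iff_false, iff_false, not_and]
    intro h1 h2
    obtain ⟨hk, hd1, hd2⟩ := key P h1 h2
    omega
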